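/- Fix an integer k ≥ 3, n = 2k, z(u) ≡ u (mod k), and (d_k; c_k) as specified. For every γ in the simple fiber F̃(d_k; c_k), the set {k+1, k+2, …, 2k} is independent in γ; that is, γ_{uv} = 0 for all k+1 ≤ u < v ≤ 2k. -/

import Mathlib

open Finset

/-- The set `P` of 2-element subsets of `{1,…,n}`, encoded as ordered pairs. -/
abbrev Edge (n : ℕ) : Type := {p : Fin n × Fin n // p.1 < p.2}

/-- Entry `γ_{uv}` of a vector `γ ∈ ℤ^P` at the unordered pair `{u,v}` (0 when `u = v`). -/
def ent {n : ℕ} (γ : Edge n → ℤ) (u v : Fin n) : ℤ :=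
  if h : u < v then γ ⟨(u, v), h⟩ else if h : v < u then γ ⟨(v, u), h⟩ else 0

/-- Entry at `{u,v}` of a vector in `ℕ^P`. -/
def entN {n : ℕ} (x : Edge n → ℕ) (u v : Fin n) : ℕ :=
  if h : u < v then x ⟨(u, v), h⟩ else if h : v < u then x ⟨(v, u), h⟩ else 0

/-- Degree sequence: `d(γ)_u = ∑_{v ≠ u} γ_{uv}`. -/
def degSeq {n : ℕ} (γ : Edge n → ℤ) (u : Fin n) : ℤ := ∑ v, ent γ u v

/-- Color sequence: `c(γ)_{ij} = ∑ γ_{uv}` over `{u,v} ∈ P` with `{z u, z v} = {i,j}`. -/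
def colorSeq {n k : ℕ} (z : Fin n → Fin k) (γ : Edge n → ℤ) (i j : Fin k) : ℤ :=
  ∑ e : Edge n,
    if (z e.1.1 = i ∧ z e.1.2 = j) ∨ (z e.1.1 = j ∧ z e.1.2 = i) then γ e else 0

/-- `γ ∈ ker_ℤ DC_{n,z}`: both the degree sequence and the color sequence vanish. -/
def inKer {n k : ℕ} (z : Fin n → Fin k) (γ : Edge n → ℤ) : Prop :=
  (∀ u, degSeq γ u = 0) ∧ ∀ i j, colorSeq z γ i j = 0

/-- The 1-norm `‖γ‖₁ = ∑_{e ∈ P} |γ_e|`. -/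
def norm1 {n : ℕ} (γ : Edge n → ℤ) : ℤ := ∑ e, |γ e|

/-- The set of moves `M_{n,z} = {γ ∈ ker_ℤ DC_{n,z} : ‖γ‖₁ = 4}`. -/
def MSet {n k : ℕ} (z : Fin n → Fin k) : Set (Edge n → ℤ) :=
  {γ | inKer z γ ∧ norm1 γ = 4}

/-- Degree sequence of a vector in `ℕ^P`. -/
def degSeqN {n : ℕ} (x : Edge n → ℕ) (u : Fin n) : ℕ := ∑ v, entN x u v

/-- Color sequence of a vector in `ℕ^P`. -/
def colorSeqN {n k : ℕ} (z : Fin n → Fin k) (x : Edge n → ℕ) (i j : Fin k) : ℕ :=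
  ∑ e : Edge n,
    if (z e.1.1 = i ∧ z e.1.2 = j) ∨ (z e.1.1 = j ∧ z e.1.2 = i) then x e else 0

/-- The fiber `F(b) = {x ∈ ℕ^P : DC_{n,z} x = b}`, where `b = (d; c)`. -/
def Fiber {n k : ℕ} (z : Fin n → Fin k) (d : Fin n → ℤ) (c : Fin k → Fin k → ℤ) :
    Set (Edge n → ℕ) :=
  {x | (∀ u, (degSeqN x u : ℤ) = d u) ∧ ∀ i j, (colorSeqN z x i j : ℤ) = c i j}

/-- The simple fiber `F̃(b) = F(b) ∩ {0,1}^P`. -/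
def SimpleFiber {n k : ℕ} (z : Fin n → Fin k) (d : Fin n → ℤ) (c : Fin k → Fin k → ℤ) :
    Set (Edge n → ℕ) :=
  {x | x ∈ Fiber z d c ∧ ∀ e, x e ≤ 1}

/-- The difference `x − x' ∈ ℤ^P` of two vectors in `ℕ^P`. -/
def diff {n : ℕ} (x x' : Edge n → ℕ) : Edge n → ℤ := fun e => (x e : ℤ) - (x' e : ℤ)

namespace ClaimTwo

lemma entN_self {n : ℕ} (x : Edge n → ℕ) (u : Fin n) : entN x u u = 0 := by
  simp [entN]

lemma entN_symm {n : ℕ} (x : Edge n → ℕ) (u v : Fin n) : entN x u v = entN x v u := by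
  unfold entN
  rcases lt_trichotomy u v with h|h|h
  · rw [dif_pos h, dif_neg (asymm h), dif_pos h]
  · subst h; rfl
  · rw [dif_neg (asymm h), dif_pos h, dif_pos h]

lemma entN_le_one {n : ℕ} (x : Edge n → ℕ) (hs : ∀ e, x e ≤ 1) (u v : Fin n) :
    entN x u v ≤ 1 := by
  unfold entN; split_ifs <;> first | exact hs _ | omega

lemma entN_edge {n : ℕ} (x : Edge n → ℕ) (e : Edge n) : entN x e.1.1 e.1.2 = x e := by
  unfold entN; rw [dif_pos e.2]

lemma two_mul_sum_edge {n : ℕ} (F : Fin n → Fin n → ℕ)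
    (hsym : ∀ u v, F u v = F v u) (hdiag : ∀ u, F u u = 0) :
    2 * ∑ e : Edge n, F e.1.1 e.1.2 = ∑ u, ∑ v, F u v := by
  have h1 : ∑ e : Edge n, F e.1.1 e.1.2
      = ∑ p ∈ univ.filter (fun p : Fin n × Fin n => p.1 < p.2), F p.1 p.2 := by
    exact (Finset.sum_subtype (p := fun p : Fin n × Fin n => p.1 < p.2)
      (univ.filter (fun p : Fin n × Fin n => p.1 < p.2))
      (by simp) (fun p => F p.1 p.2)).symm
  have h2 : ∑ p ∈ univ.filter (fun p : Fin n × Fin n => p.2 < p.1), F p.1 p.2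
      = ∑ p ∈ univ.filter (fun p : Fin n × Fin n => p.1 < p.2), F p.1 p.2 := by
    refine Finset.sum_nbij' (fun p => Prod.swap p) (fun p => Prod.swap p) ?_ ?_ ?_ ?_ ?_
    · intro p hp; simp at hp ⊢; exact hp
    · intro p hp; simp at hp ⊢; exact hp
    · intro p _; simp
    · intro p _; simp
    · intro p _; exact hsym p.1 p.2
  have h3 : ∑ u, ∑ v, F u v = ∑ p : Fin n × Fin n, F p.1 p.2 := by
    rw [← Finset.sum_product']; rfl
  rw [h3]
  rw [← Finset.sum_filter_add_sum_filter_not univ (fun p : Fin n × Fin n => p.1 < p.2)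
    (fun p => F p.1 p.2)]
  rw [← Finset.sum_filter_add_sum_filter_not (univ.filter (fun p : Fin n × Fin n => ¬ p.1 < p.2))
    (fun p : Fin n × Fin n => p.2 < p.1) (fun p => F p.1 p.2)]
  have h4 : (univ.filter (fun p : Fin n × Fin n => ¬ p.1 < p.2)).filter
      (fun p : Fin n × Fin n => p.2 < p.1)
      = univ.filter (fun p : Fin n × Fin n => p.2 < p.1) := by
    ext p; simp; intro h; exact le_of_lt h
  have h5 : ∑ p ∈ (univ.filter (fun p : Fin n × Fin n => ¬ p.1 < p.2)).filter
      (fun p : Fin n × Fin n => ¬ p.2 < p.1), F p.1 p.2 = 0 := by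
    refine Finset.sum_eq_zero fun p hp => ?_
    simp at hp
    have : p.1 = p.2 := le_antisymm hp.2 hp.1
    rw [this]; exact hdiag p.2
  rw [h4, h5, h1, h2]
  ring


variable {k : ℕ}

def Lo (i : Fin k) : Fin (2*k) := ⟨i.val, by have := i.2; omega⟩
def Hi (i : Fin k) : Fin (2*k) := ⟨i.val + k, by have := i.2; omega⟩
def nxt (i : Fin k) : Fin k := ⟨(i.val + 1) % k, Nat.mod_lt _ i.pos⟩
def prv (i : Fin k) : Fin k := ⟨(i.val + (k-1)) % k, Nat.mod_lt _ i.pos⟩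

lemma nxt_val (i : Fin k) : (nxt i).val = if i.val + 1 = k then 0 else i.val + 1 := by
  have h := i.2
  simp only [nxt]
  split
  · next h1 => rw [h1]; exact Nat.mod_self k
  · exact Nat.mod_eq_of_lt (by omega)

lemma prv_val (i : Fin k) : (prv i).val = if i.val = 0 then k - 1 else i.val - 1 := by
  have h := i.2
  have hk0 : 0 < k := i.pos
  simp only [prv]
  split
  · next h1 => rw [h1]; simpa using Nat.mod_eq_of_lt (by omega)
  · next h1 =>
      rw [Nat.mod_eq_sub_mod (by omega)]
      have h2 : i.val + (k-1) - k = i.val - 1 := by omega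
      rw [h2]; exact Nat.mod_eq_of_lt (by omega)

lemma prv_nxt (i : Fin k) : prv (nxt i) = i := by
  have h := i.2
  have h2 := (nxt i).2
  apply Fin.ext
  rw [prv_val, nxt_val]
  split_ifs <;> first | omega | tauto

lemma nxt_ne (hk : 3 ≤ k) (i : Fin k) : nxt i ≠ i := by
  have h := i.2
  intro he
  have := congrArg Fin.val he
  rw [nxt_val] at this
  split_ifs at this <;> omega

lemma prv_ne_nxt (hk : 3 ≤ k) (i : Fin k) : prv i ≠ nxt i := by
  have h := i.2
  intro he
  have := congrArg Fin.val he
  rw [nxt_val, prv_val] at this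
  split_ifs at this <;> omega

-- z value characterization
lemma z_val (hk : 3 ≤ k) (z : Fin (2*k) → Fin k) (hz : ∀ v, (z v).val = v.val % k)
    (v : Fin (2*k)) : (z v).val = if v.val < k then v.val else v.val - k := by
  have h2 := v.2
  rw [hz]
  split
  · next h => exact Nat.mod_eq_of_lt h
  · next h =>
      rw [Nat.mod_eq_sub_mod (by omega)]
      exact Nat.mod_eq_of_lt (by omega)

lemma z_Lo (hk : 3 ≤ k) (z : Fin (2*k) → Fin k) (hz : ∀ v, (z v).val = v.val % k)
    (i : Fin k) : z (Lo i) = i := by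
  have h := i.2
  apply Fin.ext
  rw [z_val hk z hz]
  simp only [Lo]
  exact if_pos h

lemma z_Hi (hk : 3 ≤ k) (z : Fin (2*k) → Fin k) (hz : ∀ v, (z v).val = v.val % k)
    (i : Fin k) : z (Hi i) = i := by
  have h := i.2
  apply Fin.ext
  rw [z_val hk z hz]
  simp only [Hi]
  refine (if_neg (show ¬ (i.val + k < k) by omega)).trans ?_
  omega

lemma eq_Lo_or_Hi (hk : 3 ≤ k) (z : Fin (2*k) → Fin k) (hz : ∀ v, (z v).val = v.val % k)
    (v : Fin (2*k)) (j : Fin k) (h : z v = j) : v = Lo j ∨ v = Hi j := by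
  have h2 := v.2
  have h3 := j.2
  have := congrArg Fin.val h
  rw [z_val hk z hz] at this
  by_cases hc : v.val < k
  · left; apply Fin.ext; simp only [Lo]; rw [if_pos hc] at this; omega
  · right; apply Fin.ext; simp only [Hi]; rw [if_neg hc] at this; omega

lemma Lo_ne_Hi (i j : Fin k) : Lo i ≠ Hi j := by
  intro h
  have := congrArg Fin.val h
  have h1 := i.2
  simp only [Lo, Hi] at this
  omega

lemma Lo_inj {i j : Fin k} (h : Lo i = Lo j) : i = j := by
  have := congrArg Fin.val h
  simp only [Lo] at this
  exact Fin.ext this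

lemma Hi_inj {i j : Fin k} (h : Hi i = Hi j) : i = j := by
  have := congrArg Fin.val h
  simp only [Hi] at this
  exact Fin.ext (by omega)

section Main

variable (hk : 3 ≤ k) (z : Fin (2*k) → Fin k) (hz : ∀ v, (z v).val = v.val % k)
  (γ : Edge (2*k) → ℕ)
include hk hz

lemma ent_zero
    (hcol : ∀ i j, colorSeqN z γ i j = if nxt i = j ∨ nxt j = i then 2 else 0)
    (u v : Fin (2*k)) (h : ¬(nxt (z u) = z v ∨ nxt (z v) = z u)) : entN γ u v = 0 := by
  rcases lt_trichotomy u v with hlt|he|hlt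
  · have h0 : colorSeqN z γ (z u) (z v) = 0 := by
      rw [hcol, if_neg h]
    unfold colorSeqN at h0
    have := (Finset.sum_eq_zero_iff).mp h0 ⟨(u,v), hlt⟩ (Finset.mem_univ _)
    rw [if_pos (Or.inl ⟨rfl, rfl⟩)] at this
    unfold entN; rw [dif_pos hlt]; exact this
  · rw [he]; exact entN_self γ v
  · have h0 : colorSeqN z γ (z u) (z v) = 0 := by
      rw [hcol, if_neg h]
    unfold colorSeqN at h0
    have := (Finset.sum_eq_zero_iff).mp h0 ⟨(v,u), hlt⟩ (Finset.mem_univ _)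
    rw [if_pos (Or.inr ⟨rfl, rfl⟩)] at this
    unfold entN; rw [dif_neg (asymm hlt), dif_pos hlt]; exact this

lemma class_eq (i j : Fin k) (hij : i ≠ j) :
    colorSeqN z γ i j = entN γ (Lo i) (Lo j) + entN γ (Lo i) (Hi j)
      + entN γ (Hi i) (Lo j) + entN γ (Hi i) (Hi j) := by
  set F : Fin (2*k) → Fin (2*k) → ℕ :=
    fun u v => if (z u = i ∧ z v = j) ∨ (z u = j ∧ z v = i) then entN γ u v else 0 with hF
  have hF1 : colorSeqN z γ i j = ∑ e : Edge (2*k), F e.1.1 e.1.2 := by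
    unfold colorSeqN
    refine Finset.sum_congr rfl fun e _ => ?_
    simp only [hF]
    by_cases hc : (z e.1.1 = i ∧ z e.1.2 = j) ∨ (z e.1.1 = j ∧ z e.1.2 = i)
    · rw [if_pos hc, if_pos hc, entN_edge]
    · rw [if_neg hc, if_neg hc]
  have hsym : ∀ u v, F u v = F v u := by
    intro u v
    simp only [hF]
    rw [entN_symm]
    by_cases hc : (z u = i ∧ z v = j) ∨ (z u = j ∧ z v = i)
    · rw [if_pos hc, if_pos (by tauto)]
    · rw [if_neg hc, if_neg (by tauto)]
  have hdiag : ∀ u, F u u = 0 := by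
    intro u; simp only [hF, entN_self]; split <;> rfl
  have hdouble := two_mul_sum_edge F hsym hdiag
  rw [← hF1] at hdouble
  have inner1 : ∀ u : Fin (2*k), z u = i → ∑ v, F u v = entN γ u (Lo j) + entN γ u (Hi j) := by
    intro u hu
    have hterm : ∀ v : Fin (2*k), F u v
        = if v ∈ ({Lo j, Hi j} : Finset (Fin (2*k))) then entN γ u v else 0 := by
      intro v
      simp only [hF, Finset.mem_insert, Finset.mem_singleton]
      by_cases hv : z v = j
      · rw [if_pos (Or.inl ⟨hu, hv⟩), if_pos (eq_Lo_or_Hi hk z hz v j hv)]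
      · rw [if_neg, if_neg]
        · rintro (h1|h1) <;> subst h1
          · exact hv (z_Lo hk z hz j)
          · exact hv (z_Hi hk z hz j)
        · rintro (⟨h1,h2⟩|⟨h1,h2⟩)
          · exact hv h2
          · exact hij (hu ▸ h1 : i = j)
    rw [Finset.sum_congr rfl (fun v _ => hterm v), Finset.sum_ite_mem,
      Finset.univ_inter, Finset.sum_pair (Lo_ne_Hi j j)]
  have inner2 : ∀ u : Fin (2*k), z u = j → ∑ v, F u v = entN γ u (Lo i) + entN γ u (Hi i) := by
    intro u hu
    have hterm : ∀ v : Fin (2*k), F u v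
        = if v ∈ ({Lo i, Hi i} : Finset (Fin (2*k))) then entN γ u v else 0 := by
      intro v
      simp only [hF, Finset.mem_insert, Finset.mem_singleton]
      by_cases hv : z v = i
      · rw [if_pos (Or.inr ⟨hu, hv⟩), if_pos (eq_Lo_or_Hi hk z hz v i hv)]
      · rw [if_neg, if_neg]
        · rintro (h1|h1) <;> subst h1
          · exact hv (z_Lo hk z hz i)
          · exact hv (z_Hi hk z hz i)
        · rintro (⟨h1,h2⟩|⟨h1,h2⟩)
          · exact hij ((hu ▸ h1 : j = i)).symm
          · exact hv h2
    rw [Finset.sum_congr rfl (fun v _ => hterm v), Finset.sum_ite_mem,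
      Finset.univ_inter, Finset.sum_pair (Lo_ne_Hi i i)]
  have outer : ∑ u, ∑ v, F u v
      = ∑ u ∈ ({Lo i, Hi i, Lo j, Hi j} : Finset (Fin (2*k))), ∑ v, F u v := by
    symm
    apply Finset.sum_subset (Finset.subset_univ _)
    intro u _ hu
    simp only [Finset.mem_insert, Finset.mem_singleton] at hu
    push_neg at hu
    apply Finset.sum_eq_zero
    intro v _
    simp only [hF]
    rw [if_neg]
    rintro (⟨h1,_⟩|⟨h1,_⟩)
    · rcases eq_Lo_or_Hi hk z hz u i h1 with h2|h2
      · exact hu.1 h2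
      · exact hu.2.1 h2
    · rcases eq_Lo_or_Hi hk z hz u j h1 with h2|h2
      · exact hu.2.2.1 h2
      · exact hu.2.2.2 h2
  have d1 : Lo i ∉ ({Hi i, Lo j, Hi j} : Finset (Fin (2*k))) := by
    simp only [Finset.mem_insert, Finset.mem_singleton]
    push_neg
    exact ⟨Lo_ne_Hi i i, fun h => hij (Lo_inj h), Lo_ne_Hi i j⟩
  have d2 : Hi i ∉ ({Lo j, Hi j} : Finset (Fin (2*k))) := by
    simp only [Finset.mem_insert, Finset.mem_singleton]
    push_neg
    exact ⟨fun h => Lo_ne_Hi j i h.symm, fun h => hij (Hi_inj h)⟩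
  rw [outer, Finset.sum_insert d1, Finset.sum_insert d2, Finset.sum_pair (Lo_ne_Hi j j),
    inner1 _ (z_Lo hk z hz i), inner1 _ (z_Hi hk z hz i),
    inner2 _ (z_Lo hk z hz j), inner2 _ (z_Hi hk z hz j),
    entN_symm γ (Lo j) (Lo i), entN_symm γ (Lo j) (Hi i),
    entN_symm γ (Hi j) (Lo i), entN_symm γ (Hi j) (Hi i)] at hdouble
  omega

lemma deg_Hi
    (hcol : ∀ i j, colorSeqN z γ i j = if nxt i = j ∨ nxt j = i then 2 else 0)
    (hdeg : ∀ u, degSeqN γ u = if u.val < k then 3 else 1) (i : Fin k) :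
    entN γ (Hi i) (Lo (prv i)) + entN γ (Hi i) (Hi (prv i))
      + entN γ (Hi i) (Lo (nxt i)) + entN γ (Hi i) (Hi (nxt i)) = 1 := by
  have h0 : degSeqN γ (Hi i) = 1 := by
    rw [hdeg, if_neg]
    simp only [Hi]
    omega
  unfold degSeqN at h0
  set S : Finset (Fin (2*k)) := {Lo (prv i), Hi (prv i), Lo (nxt i), Hi (nxt i)} with hS
  have hzero : ∀ v ∈ Finset.univ, v ∉ S → entN γ (Hi i) v = 0 := by
    intro v _ hv
    apply ent_zero hk z hz γ hcol
    rw [z_Hi hk z hz]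
    simp only [hS, Finset.mem_insert, Finset.mem_singleton] at hv
    push_neg at hv
    rintro (h1|h1)
    · rcases eq_Lo_or_Hi hk z hz v (nxt i) h1.symm with h2|h2
      · exact hv.2.2.1 h2
      · exact hv.2.2.2 h2
    · have h2 : z v = prv i := by
        have := congrArg prv h1
        rwa [prv_nxt] at this
      rcases eq_Lo_or_Hi hk z hz v (prv i) h2 with h3|h3
      · exact hv.1 h3
      · exact hv.2.1 h3
  rw [← Finset.sum_subset (Finset.subset_univ S) hzero] at h0
  have d1 : Lo (prv i) ∉ ({Hi (prv i), Lo (nxt i), Hi (nxt i)} : Finset (Fin (2*k))) := by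
    simp only [Finset.mem_insert, Finset.mem_singleton]
    push_neg
    exact ⟨Lo_ne_Hi _ _, fun h => (prv_ne_nxt hk i) (Lo_inj h), Lo_ne_Hi _ _⟩
  have d2 : Hi (prv i) ∉ ({Lo (nxt i), Hi (nxt i)} : Finset (Fin (2*k))) := by
    simp only [Finset.mem_insert, Finset.mem_singleton]
    push_neg
    exact ⟨fun h => Lo_ne_Hi _ _ h.symm, fun h => (prv_ne_nxt hk i) (Hi_inj h)⟩
  rw [hS, Finset.sum_insert d1, Finset.sum_insert d2, Finset.sum_pair (Lo_ne_Hi _ _)] at h0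
  omega

lemma noHH
    (hs : ∀ e, γ e ≤ 1)
    (hcol : ∀ i j, colorSeqN z γ i j = if nxt i = j ∨ nxt j = i then 2 else 0)
    (hdeg : ∀ u, degSeqN γ u = if u.val < k then 3 else 1) (a : Fin k) :
    entN γ (Hi a) (Hi (nxt a)) = 0 := by
  by_contra hne
  have h1 : entN γ (Hi a) (Hi (nxt a)) = 1 := by
    have := entN_le_one γ hs (Hi a) (Hi (nxt a))
    omega
  have step : ∀ b : Fin k,
      (entN γ (Hi b) (Lo (nxt b)) = 0 ∧ entN γ (Hi b) (Hi (nxt b)) = 0) →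
      (entN γ (Hi (nxt b)) (Lo (nxt (nxt b))) = 0 ∧
        entN γ (Hi (nxt b)) (Hi (nxt (nxt b))) = 0) := by
    rintro b ⟨hbL, hbH⟩
    have hC := class_eq hk z hz γ b (nxt b) (nxt_ne hk b).symm
    have hC2 : colorSeqN z γ b (nxt b) = 2 := by
      rw [hcol, if_pos (Or.inl rfl)]
    rw [hC2, hbL, hbH] at hC
    have hLL := entN_le_one γ hs (Lo b) (Lo (nxt b))
    have hLH := entN_le_one γ hs (Lo b) (Hi (nxt b))
    have hLH1 : entN γ (Lo b) (Hi (nxt b)) = 1 := by omega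
    have hD := deg_Hi hk z hz γ hcol hdeg (nxt b)
    rw [prv_nxt] at hD
    have hsymLH : entN γ (Hi (nxt b)) (Lo b) = 1 := by
      rw [entN_symm]; exact hLH1
    constructor <;> omega
  have base : entN γ (Hi (nxt a)) (Lo (nxt (nxt a))) = 0 ∧
      entN γ (Hi (nxt a)) (Hi (nxt (nxt a))) = 0 := by
    have hD := deg_Hi hk z hz γ hcol hdeg (nxt a)
    rw [prv_nxt] at hD
    have hsymHH : entN γ (Hi (nxt a)) (Hi a) = 1 := by
      rw [entN_symm]; exact h1
    constructor <;> omega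
  have iter : ∀ m : ℕ,
      entN γ (Hi (nxt^[m] (nxt a))) (Lo (nxt (nxt^[m] (nxt a)))) = 0 ∧
      entN γ (Hi (nxt^[m] (nxt a))) (Hi (nxt (nxt^[m] (nxt a)))) = 0 := by
    intro m
    induction m with
    | zero => exact base
    | succ m ih =>
        rw [Function.iterate_succ_apply']
        exact step _ ih
  have hv : ∀ (m : ℕ) (i : Fin k), (nxt^[m] i).val = (i.val + m) % k := by
    intro m
    induction m with
    | zero =>
        intro i
        simp only [Function.iterate_zero, id_eq, Nat.add_zero]
        exact (Nat.mod_eq_of_lt i.2).symm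
    | succ m ih =>
        intro i
        rw [Function.iterate_succ_apply', show (nxt (nxt^[m] i)).val = ((nxt^[m] i).val + 1) % k from rfl, ih i,
          Nat.mod_add_mod, ← Nat.add_assoc]
  have hiterval : (nxt^[k-1] (nxt a)) = a := by
    apply Fin.ext
    rw [hv, show (nxt a).val = (a.val + 1) % k from rfl, Nat.mod_add_mod]
    have h2 := a.2
    have h3 : a.val + 1 + (k-1) = a.val + k := by omega
    rw [h3, Nat.add_mod_right]
    exact Nat.mod_eq_of_lt h2
  have hfin := (iter (k-1)).2
  rw [hiterval] at hfin
  omega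

end Main
end ClaimTwo

open ClaimTwo in
/-- Claim 2. For every `γ` in the simple fiber, the set
`{k+1, …, 2k}` is independent: `γ_{uv} = 0` whenever both `u` and `v` lie in it. -/
theorem claim_two (k : ℕ) (hk : 3 ≤ k) (γ : Edge (2 * k) → ℕ)
    (hγ : γ ∈ SimpleFiber
      (fun u : Fin (2 * k) => (⟨u.val % k, Nat.mod_lt _ (by omega)⟩ : Fin k))
      (fun u : Fin (2 * k) => if u.val < k then 3 else 1)
      (fun i j : Fin k =>
        if (i.val + 1) % k = j.val ∨ (j.val + 1) % k = i.val then 2 else 0)) :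
    ∀ u v : Fin (2 * k), k ≤ u.val → k ≤ v.val → entN γ u v = 0 := by
  obtain ⟨⟨hdegZ, hcolZ⟩, hs⟩ := hγ
  set z : Fin (2 * k) → Fin k :=
    fun u : Fin (2 * k) => (⟨u.val % k, Nat.mod_lt _ (by omega)⟩ : Fin k) with hzdef
  have hz : ∀ v : Fin (2 * k), (z v).val = v.val % k := fun v => rfl
  have hdeg : ∀ u : Fin (2 * k), degSeqN γ u = if u.val < k then 3 else 1 := by
    intro u
    have h : (degSeqN γ u : ℤ) = if u.val < k then 3 else 1 := hdegZ u
    by_cases hc : u.val < k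
    · rw [if_pos hc] at h ⊢; exact_mod_cast h
    · rw [if_neg hc] at h ⊢; exact_mod_cast h
  have hcol : ∀ i j : Fin k,
      colorSeqN z γ i j = if nxt i = j ∨ nxt j = i then 2 else 0 := by
    intro i j
    have h : (colorSeqN z γ i j : ℤ)
        = if (i.val + 1) % k = j.val ∨ (j.val + 1) % k = i.val then 2 else 0 := hcolZ i j
    have hcond : ((i.val + 1) % k = j.val ∨ (j.val + 1) % k = i.val)
        ↔ (nxt i = j ∨ nxt j = i) := by
      rw [Fin.ext_iff (a := nxt i) (b := j), Fin.ext_iff (a := nxt j) (b := i)]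
      exact Iff.rfl
    by_cases hc : (i.val + 1) % k = j.val ∨ (j.val + 1) % k = i.val
    · rw [if_pos hc] at h; rw [if_pos (hcond.mp hc)]; exact_mod_cast h
    · rw [if_neg hc] at h; rw [if_neg (fun hn => hc (hcond.mpr hn))]; exact_mod_cast h
  intro u v hu hv
  have hu2 := u.2
  have hv2 := v.2
  have hmu : u.val % k = u.val - k := by
    rw [Nat.mod_eq_sub_mod hu]; exact Nat.mod_eq_of_lt (by omega)
  have hmv : v.val % k = v.val - k := by
    rw [Nat.mod_eq_sub_mod hv]; exact Nat.mod_eq_of_lt (by omega)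
  have hu' : u = Hi (z u) := by
    apply Fin.ext
    have : (z u).val = u.val % k := hz u
    simp only [Hi]
    omega
  have hv' : v = Hi (z v) := by
    apply Fin.ext
    have : (z v).val = v.val % k := hz v
    simp only [Hi]
    omega
  by_cases hc : nxt (z u) = z v
  · rw [hu', hv', ← hc]
    exact noHH hk z hz γ hs hcol hdeg (z u)
  by_cases hc2 : nxt (z v) = z u
  · rw [hu', hv', ← hc2, entN_symm]
    exact noHH hk z hz γ hs hcol hdeg (z v)
  · exact ent_zero hk z hz γ hcol u v (by tauto)
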